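/- If p ≥ 5 is prime and f and g are modular forms of weight p-1 on SL_2(ℤ) with p-integral rational q-expansion coefficients satisfying f ≡ g ≡ 1 mod p, then their divisor polynomials agree mod p: F(f, x) ≡ F(g, x) mod p. -/

import Mathlib

open PowerSeries

noncomputable section

/-- The Eisenstein series `E₄ = 1 + 240 Σ σ₃(n) qⁿ` as a formal power series. -/
def E4 : PowerSeries ℚ :=
  PowerSeries.mk fun n => if n = 0 then 1 else 240 * ∑ d ∈ n.divisors, (d : ℚ) ^ 3

/-- The Eisenstein series `E₆ = 1 - 504 Σ σ₅(n) qⁿ` as a formal power series. -/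
def E6 : PowerSeries ℚ :=
  PowerSeries.mk fun n => if n = 0 then 1 else -504 * ∑ d ∈ n.divisors, (d : ℚ) ^ 5

/-- The discriminant `Δ = (E₄³ - E₆²)/1728` as a formal power series. -/
def Δ' : PowerSeries ℚ := (1728 : ℚ)⁻¹ • (E4 ^ 3 - E6 ^ 2)

/-- The form `Ẽ_w` attached to an even weight `w`. -/
def Etilde (w : ℕ) : PowerSeries ℚ :=
  if w % 12 = 0 then 1
  else if w % 12 = 2 then E4 ^ 2 * E6
  else if w % 12 = 4 then E4
  else if w % 12 = 6 then E6
  else if w % 12 = 8 then E4 ^ 2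
  else E4 * E6

/-- The polynomial `h_w` attached to an even weight `w`. -/
def hPoly (w : ℕ) : Polynomial ℚ :=
  if w % 12 = 0 then 1
  else if w % 12 = 2 then Polynomial.X ^ 2 * (Polynomial.X - 1728)
  else if w % 12 = 4 then Polynomial.X
  else if w % 12 = 6 then Polynomial.X - 1728
  else if w % 12 = 8 then Polynomial.X ^ 2
  else Polynomial.X * (Polynomial.X - 1728)

/-- `m` in the decomposition `w = 12m + s`, `s ∈ {0,4,6,8,10,14}`. -/
def mOf (w : ℕ) : ℕ := if w % 12 = 2 then w / 12 - 1 else w / 12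

/-- The modular form of weight `w` whose divisor polynomial data is the
polynomial `A`: namely `Δ^m · Ẽ_w · Ã(j)`, written as the power series
`Σ_i A_i · E₄^{3i} · Δ^{m-i} · Ẽ_w` (since `jⁱ Δ^m = E₄^{3i} Δ^{m-i}`). -/
def formOf (w : ℕ) (A : Polynomial ℚ) : PowerSeries ℚ :=
  ∑ i ∈ Finset.range (mOf w + 1), A.coeff i • (E4 ^ (3 * i) * Δ' ^ (mOf w - i) * Etilde w)

/-- `x ∈ ℚ` is `p`-integral and divisible by `p`: `x = p·(a/b)` with `p ∤ b`. -/
def PDvd (p : ℕ) (x : ℚ) : Prop :=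
  ∃ a b : ℤ, ¬ ((p : ℤ) ∣ b) ∧ x * (b : ℚ) = (p : ℚ) * (a : ℚ)

/-! ### Auxiliary material: `p`-integrality -/

/-- `x ∈ ℚ` is `p`-integral: `x = a/b` with `p ∤ b`. -/
def PInt (p : ℕ) (x : ℚ) : Prop :=
  ∃ a b : ℤ, ¬ ((p : ℤ) ∣ b) ∧ x * (b : ℚ) = (a : ℚ)

variable {p : ℕ}

lemma not_dvd_one (hp5 : 5 ≤ p) : ¬ ((p : ℤ) ∣ 1) := by
  intro h
  have h1 := Int.le_of_dvd one_pos h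
  have h2 : (5 : ℤ) ≤ (p : ℤ) := by exact_mod_cast hp5
  omega

lemma pint_intCast (hp5 : 5 ≤ p) (n : ℤ) : PInt p (n : ℚ) :=
  ⟨n, 1, not_dvd_one hp5, by push_cast; ring⟩

lemma pint_zero (hp5 : 5 ≤ p) : PInt p 0 := by
  simpa using pint_intCast hp5 0

lemma pint_one (hp5 : 5 ≤ p) : PInt p 1 := by
  simpa using pint_intCast hp5 1

lemma pint_mul (hp : p.Prime) {x y : ℚ} (hx : PInt p x) (hy : PInt p y) :
    PInt p (x * y) := by
  obtain ⟨a, b, hb, h1⟩ := hx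
  obtain ⟨c, d, hd, h2⟩ := hy
  have hpZ : Prime (p : ℤ) := Nat.prime_iff_prime_int.mp hp
  refine ⟨a * c, b * d, ?_, ?_⟩
  · intro h; rcases hpZ.dvd_mul.mp h with h | h <;> [exact hb h; exact hd h]
  · push_cast
    linear_combination (y * (d:ℚ)) * h1 + (a:ℚ) * h2

lemma pint_add {x y : ℚ} (hp : p.Prime) (hx : PInt p x) (hy : PInt p y) :
    PInt p (x + y) := by
  obtain ⟨a, b, hb, h1⟩ := hx
  obtain ⟨c, d, hd, h2⟩ := hy
  have hpZ : Prime (p : ℤ) := Nat.prime_iff_prime_int.mp hp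
  refine ⟨a * d + c * b, b * d, ?_, ?_⟩
  · intro h; rcases hpZ.dvd_mul.mp h with h | h <;> [exact hb h; exact hd h]
  · push_cast
    linear_combination (d:ℚ) * h1 + (b:ℚ) * h2

lemma pint_neg {x : ℚ} (hx : PInt p x) : PInt p (-x) := by
  obtain ⟨a, b, hb, h1⟩ := hx
  exact ⟨-a, b, hb, by push_cast; linear_combination -h1⟩

lemma pint_sub {x y : ℚ} (hp : p.Prime) (hx : PInt p x) (hy : PInt p y) :
    PInt p (x - y) := by
  simpa [sub_eq_add_neg] using pint_add hp hx (pint_neg hy)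

lemma pint_sum (hp : p.Prime) (hp5 : 5 ≤ p) {ι : Type*} (s : Finset ι) (f : ι → ℚ)
    (h : ∀ i ∈ s, PInt p (f i)) : PInt p (∑ i ∈ s, f i) := by
  classical
  induction s using Finset.cons_induction with
  | empty => simpa using pint_zero hp5
  | cons i s hi ih =>
    rw [Finset.sum_cons]
    exact pint_add hp (h i (Finset.mem_cons_self i s))
      (ih fun j hj => h j (Finset.mem_cons_of_mem hj))

lemma pdvd_zero (hp5 : 5 ≤ p) : PDvd p 0 := ⟨0, 1, not_dvd_one hp5, by simp⟩

lemma pdvd_add {x y : ℚ} (hp : p.Prime) (hx : PDvd p x) (hy : PDvd p y) :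
    PDvd p (x + y) := by
  obtain ⟨a, b, hb, h1⟩ := hx
  obtain ⟨c, d, hd, h2⟩ := hy
  have hpZ : Prime (p : ℤ) := Nat.prime_iff_prime_int.mp hp
  refine ⟨a * d + c * b, b * d, ?_, ?_⟩
  · intro h; rcases hpZ.dvd_mul.mp h with h | h <;> [exact hb h; exact hd h]
  · push_cast
    linear_combination (d:ℚ) * h1 + (b:ℚ) * h2

lemma pdvd_neg {x : ℚ} (hx : PDvd p x) : PDvd p (-x) := by
  obtain ⟨a, b, hb, h1⟩ := hx
  exact ⟨-a, b, hb, by push_cast; linear_combination -h1⟩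

lemma pdvd_sub {x y : ℚ} (hp : p.Prime) (hx : PDvd p x) (hy : PDvd p y) :
    PDvd p (x - y) := by
  simpa [sub_eq_add_neg] using pdvd_add hp hx (pdvd_neg hy)

lemma pdvd_mul_pint {x y : ℚ} (hp : p.Prime) (hx : PDvd p x) (hy : PInt p y) :
    PDvd p (x * y) := by
  obtain ⟨a, b, hb, h1⟩ := hx
  obtain ⟨c, d, hd, h2⟩ := hy
  have hpZ : Prime (p : ℤ) := Nat.prime_iff_prime_int.mp hp
  refine ⟨a * c, b * d, ?_, ?_⟩
  · intro h; rcases hpZ.dvd_mul.mp h with h | h <;> [exact hb h; exact hd h]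
  · push_cast
    linear_combination (y * (d:ℚ)) * h1 + ((p:ℚ) * (a:ℚ)) * h2

lemma pint_mul_pdvd {x y : ℚ} (hp : p.Prime) (hx : PInt p x) (hy : PDvd p y) :
    PDvd p (x * y) := by
  rw [mul_comm]; exact pdvd_mul_pint hp hy hx

lemma pdvd_sum (hp : p.Prime) (hp5 : 5 ≤ p) {ι : Type*} (s : Finset ι) (f : ι → ℚ)
    (h : ∀ i ∈ s, PDvd p (f i)) : PDvd p (∑ i ∈ s, f i) := by
  classical
  induction s using Finset.cons_induction with
  | empty => simpa using pdvd_zero hp5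
  | cons i s hi ih =>
    rw [Finset.sum_cons]
    exact pdvd_add hp (h i (Finset.mem_cons_self i s))
      (ih fun j hj => h j (Finset.mem_cons_of_mem hj))

lemma not_dvd_1728 (hp : p.Prime) (hp5 : 5 ≤ p) : ¬ ((p : ℤ) ∣ 1728) := by
  intro h
  have h' : p ∣ 1728 := by exact_mod_cast h
  have h1728 : (1728 : ℕ) = 2 ^ 6 * 3 ^ 3 := by norm_num
  rw [h1728] at h'
  rcases (Nat.Prime.dvd_mul hp).mp h' with h | h
  · have := Nat.le_of_dvd (by norm_num) (Nat.Prime.dvd_of_dvd_pow hp h)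
    omega
  · have := Nat.le_of_dvd (by norm_num) (Nat.Prime.dvd_of_dvd_pow hp h)
    omega

lemma pint_inv1728 (hp : p.Prime) (hp5 : 5 ≤ p) : PInt p (1728 : ℚ)⁻¹ :=
  ⟨1, 1728, not_dvd_1728 hp hp5, by norm_num⟩

/-! ### Coefficient computations -/

lemma coeff0_E4 : (coeff 0) E4 = 1 := by simp [E4]
lemma coeff0_E6 : (coeff 0) E6 = 1 := by simp [E6]
lemma coeff1_E4 : (coeff 1) E4 = 240 := by simp [E4]
lemma coeff1_E6 : (coeff 1) E6 = -504 := by simp [E6]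

lemma coeff_one_mul' (f g : PowerSeries ℚ) :
    (coeff 1) (f * g) = (coeff 0) f * (coeff 1) g + (coeff 1) f * (coeff 0) g := by
  rw [PowerSeries.coeff_mul, Finset.Nat.sum_antidiagonal_eq_sum_range_succ_mk]
  simp [Finset.sum_range_succ]

lemma coeff_zero_mul' (f g : PowerSeries ℚ) :
    (coeff 0) (f * g) = (coeff 0) f * (coeff 0) g := by
  simp [PowerSeries.coeff_zero_eq_constantCoeff, map_mul]

lemma coeff0_pow (f : PowerSeries ℚ) (k : ℕ) :
    (coeff 0) (f ^ k) = ((coeff 0) f) ^ k := by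
  simp [PowerSeries.coeff_zero_eq_constantCoeff, map_pow]

lemma coeff0_Δ' : (coeff 0) Δ' = 0 := by
  rw [Δ', map_smul, map_sub, coeff0_pow, coeff0_pow, coeff0_E4, coeff0_E6]
  norm_num

lemma coeff1_Δ' : (coeff 1) Δ' = 1 := by
  have h43 : (coeff 1) (E4 ^ 3) = 720 := by
    have h2 : (coeff 1) (E4 ^ 2) = 480 := by
      rw [pow_two, coeff_one_mul', coeff0_E4, coeff1_E4]; norm_num
    have h02 : (coeff 0) (E4 ^ 2) = 1 := by
      rw [pow_two, coeff_zero_mul', coeff0_E4]; norm_num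
    rw [pow_succ, coeff_one_mul', h2, h02, coeff0_E4, coeff1_E4]; norm_num
  have h62 : (coeff 1) (E6 ^ 2) = -1008 := by
    rw [pow_two, coeff_one_mul', coeff0_E6, coeff1_E6]; norm_num
  rw [Δ', map_smul, map_sub, h43, h62]
  norm_num

lemma coeff0_Etilde (w : ℕ) : (coeff 0) (Etilde w) = 1 := by
  rw [Etilde]
  split_ifs <;>
    simp [coeff_zero_mul', coeff0_pow, coeff0_E4, coeff0_E6,
      PowerSeries.coeff_zero_eq_constantCoeff]

lemma coeff_pow_lt {f : PowerSeries ℚ} (h0 : (coeff 0) f = 0) :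
    ∀ k n, n < k → (coeff n) (f ^ k) = 0 := by
  intro k
  induction k with
  | zero => intro n hn; omega
  | succ k ih =>
    intro n hn
    rw [pow_succ, PowerSeries.coeff_mul]
    apply Finset.sum_eq_zero
    rintro ⟨a, b⟩ hm
    rw [Finset.HasAntidiagonal.mem_antidiagonal] at hm
    rcases lt_or_ge a k with h | h
    · rw [ih a h, zero_mul]
    · have hb : b = 0 := by omega
      subst hb
      rw [h0, mul_zero]

lemma coeff_pow_self {f : PowerSeries ℚ} (h0 : (coeff 0) f = 0) (k : ℕ) :
    (coeff k) (f ^ k) = ((coeff 1) f) ^ k := by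
  induction k with
  | zero => simp
  | succ k ih =>
    rw [pow_succ, PowerSeries.coeff_mul]
    rw [Finset.sum_eq_single_of_mem (k, 1) (by simp)]
    · rw [ih, pow_succ]
    · rintro ⟨a, b⟩ hm hne
      rw [Finset.HasAntidiagonal.mem_antidiagonal] at hm
      rcases lt_or_ge a k with h | h
      · rw [coeff_pow_lt h0 k a h, zero_mul]
      · rcases Nat.eq_or_lt_of_le h with h' | h'
        · have ha : a = k := h'.symm
          have hb : b = 1 := by omega
          subst ha; subst hb; exact absurd rfl hne
        · have hb : b = 0 := by omega
          subst hb
          rw [h0, mul_zero]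

lemma coeff_mul_lt {g : PowerSeries ℚ} {k : ℕ} (hg : ∀ n < k, (coeff n) g = 0)
    (u : PowerSeries ℚ) {n : ℕ} (hn : n < k) : (coeff n) (g * u) = 0 := by
  rw [PowerSeries.coeff_mul]
  apply Finset.sum_eq_zero
  rintro ⟨a, b⟩ hm
  rw [Finset.HasAntidiagonal.mem_antidiagonal] at hm
  rw [hg a (by omega), zero_mul]

lemma coeff_mul_self {g : PowerSeries ℚ} {k : ℕ} (hg : ∀ n < k, (coeff n) g = 0)
    (u : PowerSeries ℚ) : (coeff k) (g * u) = (coeff k) g * (coeff 0) u := by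
  rw [PowerSeries.coeff_mul]
  rw [Finset.sum_eq_single_of_mem (k, 0) (by simp)]
  rintro ⟨a, b⟩ hm hne
  rw [Finset.HasAntidiagonal.mem_antidiagonal] at hm
  rcases lt_or_ge a k with h | h
  · rw [hg a h, zero_mul]
  · have ha : a = k := by omega
    have hb : b = 0 := by omega
    subst ha; subst hb; exact absurd rfl hne

/-! ### `p`-integrality of the coefficients -/

lemma gint_one (hp5 : 5 ≤ p) : ∀ n, PInt p ((coeff n) (1 : PowerSeries ℚ)) := by
  intro n
  rw [PowerSeries.coeff_one]
  split_ifs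
  · exact pint_one hp5
  · exact pint_zero hp5

lemma gint_mul (hp : p.Prime) (hp5 : 5 ≤ p) {f g : PowerSeries ℚ}
    (hf : ∀ n, PInt p ((coeff n) f)) (hg : ∀ n, PInt p ((coeff n) g)) :
    ∀ n, PInt p ((coeff n) (f * g)) := by
  intro n
  rw [PowerSeries.coeff_mul]
  exact pint_sum hp hp5 _ _ fun q _ => pint_mul hp (hf q.1) (hg q.2)

lemma gint_pow (hp : p.Prime) (hp5 : 5 ≤ p) {f : PowerSeries ℚ}
    (hf : ∀ n, PInt p ((coeff n) f)) (k : ℕ) :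
    ∀ n, PInt p ((coeff n) (f ^ k)) := by
  induction k with
  | zero => simpa using gint_one hp5
  | succ k ih =>
    rw [pow_succ]
    exact gint_mul hp hp5 ih hf

lemma gint_E4 (hp5 : 5 ≤ p) : ∀ n, PInt p ((coeff n) E4) := by
  intro n
  rw [E4, PowerSeries.coeff_mk]
  split_ifs
  · exact pint_one hp5
  · have : (240 : ℚ) * ∑ d ∈ n.divisors, (d : ℚ) ^ 3
        = (((240 * ∑ d ∈ n.divisors, (d : ℤ) ^ 3 : ℤ)) : ℚ) := by
      push_cast; ring
    rw [this]
    exact pint_intCast hp5 _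

lemma gint_E6 (hp5 : 5 ≤ p) : ∀ n, PInt p ((coeff n) E6) := by
  intro n
  rw [E6, PowerSeries.coeff_mk]
  split_ifs
  · exact pint_one hp5
  · have : (-504 : ℚ) * ∑ d ∈ n.divisors, (d : ℚ) ^ 5
        = (((-504 * ∑ d ∈ n.divisors, (d : ℤ) ^ 5 : ℤ)) : ℚ) := by
      push_cast; ring
    rw [this]
    exact pint_intCast hp5 _

lemma gint_Δ' (hp : p.Prime) (hp5 : 5 ≤ p) : ∀ n, PInt p ((coeff n) Δ') := by
  intro n
  rw [Δ', map_smul, smul_eq_mul, map_sub]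
  exact pint_mul hp (pint_inv1728 hp hp5)
    (pint_sub hp (gint_pow hp hp5 (gint_E4 hp5) 3 n) (gint_pow hp hp5 (gint_E6 hp5) 2 n))

lemma gint_Etilde (hp : p.Prime) (hp5 : 5 ≤ p) (w : ℕ) :
    ∀ n, PInt p ((coeff n) (Etilde w)) := by
  rw [Etilde]
  split_ifs
  · exact gint_one hp5
  · exact gint_mul hp hp5 (gint_pow hp hp5 (gint_E4 hp5) 2) (gint_E6 hp5)
  · exact gint_E4 hp5
  · exact gint_E6 hp5
  · exact gint_pow hp hp5 (gint_E4 hp5) 2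
  · exact gint_mul hp hp5 (gint_E4 hp5) (gint_E6 hp5)

lemma pint_polyMul (hp : p.Prime) (hp5 : 5 ≤ p) {q r : Polynomial ℚ}
    (hq : ∀ i, PInt p (q.coeff i)) (hr : ∀ i, PInt p (r.coeff i)) :
    ∀ i, PInt p ((q * r).coeff i) := by
  intro i
  rw [Polynomial.coeff_mul]
  exact pint_sum hp hp5 _ _ fun x _ => pint_mul hp (hq x.1) (hr x.2)

lemma pint_hPoly (hp : p.Prime) (hp5 : 5 ≤ p) (w : ℕ) :
    ∀ i, PInt p ((hPoly w).coeff i) := by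
  have hX : ∀ i, PInt p ((Polynomial.X : Polynomial ℚ).coeff i) := by
    intro i
    rw [Polynomial.coeff_X]
    split_ifs
    · exact pint_one hp5
    · exact pint_zero hp5
  have hone : ∀ i, PInt p ((1 : Polynomial ℚ).coeff i) := by
    intro i
    rw [Polynomial.coeff_one]
    split_ifs
    · exact pint_one hp5
    · exact pint_zero hp5
  have hc : ∀ i, PInt p ((1728 : Polynomial ℚ).coeff i) := by
    intro i
    rcases i with _ | i
    · rw [Polynomial.coeff_ofNat_zero]
      simpa using pint_intCast hp5 1728
    · rw [Polynomial.coeff_ofNat_succ]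
      exact pint_zero hp5
  have hX1728 : ∀ i, PInt p ((Polynomial.X - 1728 : Polynomial ℚ).coeff i) := by
    intro i
    rw [Polynomial.coeff_sub]
    exact pint_sub hp (hX i) (hc i)
  have hX2 : ∀ i, PInt p ((Polynomial.X ^ 2 : Polynomial ℚ).coeff i) := by
    rw [pow_two]; exact pint_polyMul hp hp5 hX hX
  rw [hPoly]
  split_ifs
  · exact hone
  · exact pint_polyMul hp hp5 hX2 hX1728
  · exact hX
  · exact hX1728
  · exact hX2
  · exact pint_polyMul hp hp5 hX hX1728

/-! ### Main theorem -/

lemma coeff_formOf (w : ℕ) (P : Polynomial ℚ) (n : ℕ) :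
    (coeff n) (formOf w P) = ∑ j ∈ Finset.range (mOf w + 1),
      P.coeff j * (coeff n) (E4 ^ (3 * j) * Δ' ^ (mOf w - j) * Etilde w) := by
  rw [formOf, map_sum]
  exact Finset.sum_congr rfl fun j _ => by rw [map_smul, smul_eq_mul]

theorem divisor_polynomials_congruent (p : ℕ) (hp : p.Prime) (hp5 : 5 ≤ p)
    (A B : Polynomial ℚ)
    (hA : A.natDegree ≤ mOf (p - 1)) (hB : B.natDegree ≤ mOf (p - 1))
    (hfA : ∀ n : ℕ, PDvd p ((coeff n) (formOf (p - 1) A) - if n = 0 then 1 else 0))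
    (hfB : ∀ n : ℕ, PDvd p ((coeff n) (formOf (p - 1) B) - if n = 0 then 1 else 0)) :
    ∀ i : ℕ, PDvd p ((hPoly (p - 1) * A - hPoly (p - 1) * B).coeff i) := by
  set w := p - 1 with hw
  set m := mOf w with hmdef
  set C : Polynomial ℚ := A - B with hCdef
  set T : ℕ → PowerSeries ℚ := fun j => E4 ^ (3 * j) * Δ' ^ (m - j) * Etilde w with hTdef
  have hTring : ∀ j, T j = Δ' ^ (m - j) * (E4 ^ (3 * j) * Etilde w) := fun j => by
    rw [hTdef]; ring
  have hTlt : ∀ j n, n < m - j → (coeff n) (T j) = 0 := fun j n hn => by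
    rw [hTring]
    exact coeff_mul_lt (fun n' hn' => coeff_pow_lt coeff0_Δ' _ n' hn') _ hn
  have hTself : ∀ j, (coeff (m - j)) (T j) = 1 := fun j => by
    rw [hTring, coeff_mul_self (fun n' hn' => coeff_pow_lt coeff0_Δ' _ n' hn'),
      coeff_pow_self coeff0_Δ', coeff1_Δ', one_pow, one_mul, coeff_zero_mul',
      coeff0_pow, coeff0_E4, coeff0_Etilde, one_pow, one_mul]
  have hTint : ∀ j n, PInt p ((coeff n) (T j)) := fun j n => by
    rw [hTdef]
    exact gint_mul hp hp5
      (gint_mul hp hp5 (gint_pow hp hp5 (gint_E4 hp5) (3 * j))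
        (gint_pow hp hp5 (gint_Δ' hp hp5) (m - j)))
      (gint_Etilde hp hp5 w) n
  have hfC : ∀ n, PDvd p (∑ j ∈ Finset.range (m + 1), C.coeff j * (coeff n) (T j)) := by
    intro n
    have h1 := pdvd_sub hp (hfA n) (hfB n)
    rw [sub_sub_sub_cancel_right] at h1
    have h2 : ∑ j ∈ Finset.range (m + 1), C.coeff j * (coeff n) (T j)
        = (coeff n) (formOf w A) - (coeff n) (formOf w B) := by
      rw [coeff_formOf, coeff_formOf, ← Finset.sum_sub_distrib]
      exact Finset.sum_congr rfl fun j _ => by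
        rw [hCdef, Polynomial.coeff_sub, sub_mul]
    rw [h2]
    exact h1
  have hdeg : C.natDegree ≤ m := le_trans (Polynomial.natDegree_sub_le A B) (max_le hA hB)
  have key : ∀ d i, m < i + d → PDvd p (C.coeff i) := by
    intro d
    induction d with
    | zero =>
      intro i hi
      rw [Polynomial.coeff_eq_zero_of_natDegree_lt (by omega)]
      exact pdvd_zero hp5
    | succ d ih =>
      intro i hi
      rcases lt_or_ge m (i + d) with h | h
      · exact ih i h
      have hieq : m = i + d := by omega
      have himem : i ∈ Finset.range (m + 1) := Finset.mem_range.mpr (by omega)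
      have hsplit : C.coeff i * (coeff (m - i)) (T i)
            + ∑ j ∈ (Finset.range (m + 1)).erase i, C.coeff j * (coeff (m - i)) (T j)
          = ∑ j ∈ Finset.range (m + 1), C.coeff j * (coeff (m - i)) (T j) :=
        Finset.add_sum_erase _ (fun j => C.coeff j * (coeff (m - i)) (T j)) himem
      have hrest : PDvd p (∑ j ∈ (Finset.range (m + 1)).erase i,
          C.coeff j * (coeff (m - i)) (T j)) := by
        apply pdvd_sum hp hp5
        intro j hj
        rcases lt_trichotomy j i with h' | h' | h'
        · rw [hTlt j (m - i) (by omega), mul_zero]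
          exact pdvd_zero hp5
        · exact absurd h' (Finset.ne_of_mem_erase hj)
        · exact pdvd_mul_pint hp (ih j (by omega)) (hTint j (m - i))
      have hCi : C.coeff i
          = (∑ j ∈ Finset.range (m + 1), C.coeff j * (coeff (m - i)) (T j))
            - ∑ j ∈ (Finset.range (m + 1)).erase i, C.coeff j * (coeff (m - i)) (T j) := by
        rw [← hsplit, hTself i, mul_one]
        ring
      rw [hCi]
      exact pdvd_sub hp (hfC (m - i)) hrest
  intro i
  rw [← mul_sub, ← hCdef, Polynomial.coeff_mul]
  apply pdvd_sum hp hp5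
  rintro ⟨a, b⟩ _
  exact pint_mul_pdvd hp (pint_hPoly hp hp5 w a) (key (m + 1) b (by omega))

end
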